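/- For each 1 ≤ m ≤ n, the vector v_m ∈ ℝ^{n+2} with components v_m(0) = 1, v_m(j) = λ_m·Ũ_{j−1}^{(m)}/√q − Ũ_{j−2}^{(m)}/√p for 1 ≤ j ≤ n, and v_m(n+1) = √q·(λ_m·Ũ_n^{(m)}/√q − Ũ_{n−1}^{(m)}/√p) has squared Euclidean norm ‖v_m‖² = ((n+1)/(2p)) · (1 − λ_m²)/sin²θ_m. -/

import Mathlib

open Filter Finset
open Fin.NatCast

/-- The `(n+2) × (n+2)` Jacobi matrix of the reflected random walk on the path:
zero diagonal, `J(0,1) = √q`, `J(i,i+1) = √(pq)` for `1 ≤ i ≤ n-1`, `J(n,n+1) = √p`,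
and symmetric. -/
noncomputable def jacobiM (p q : ℝ) (n : ℕ) : Matrix (Fin (n + 2)) (Fin (n + 2)) ℝ :=
  fun k l =>
    if k.1 + 1 = l.1 then
      (if k.1 = 0 then Real.sqrt q else if k.1 = n then Real.sqrt p else Real.sqrt (p * q))
    else if l.1 + 1 = k.1 then
      (if l.1 = 0 then Real.sqrt q else if l.1 = n then Real.sqrt p else Real.sqrt (p * q))
    else 0

/-- `θ_m = mπ/(n+1)`. -/
noncomputable def thetaAngle (n m : ℕ) : ℝ := m * Real.pi / (n + 1)

/-- `λ_m = 2√(pq)·cos θ_m`. -/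
noncomputable def lamEig (p q : ℝ) (n m : ℕ) : ℝ :=
  2 * Real.sqrt (p * q) * Real.cos (thetaAngle n m)

/-- `Ũ_k^{(m)} = sin((k+1)θ_m)/sin θ_m` for integers `k ≥ -1`
(so `Ũ_{-1}^{(m)} = 0` and `Ũ_0^{(m)} = 1`). -/
noncomputable def Ubar (n m : ℕ) (k : ℤ) : ℝ :=
  Real.sin ((k + 1) * thetaAngle n m) / Real.sin (thetaAngle n m)

/-- The vector `v_m` with `v_m(0) = 1`,
`v_m(j) = λ_m·Ũ_{j-1}^{(m)}/√q - Ũ_{j-2}^{(m)}/√p` for `1 ≤ j ≤ n`, and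
`v_m(n+1) = √q·(λ_m·Ũ_n^{(m)}/√q - Ũ_{n-1}^{(m)}/√p)`. -/
noncomputable def vVec (p q : ℝ) (n m : ℕ) : Fin (n + 2) → ℝ :=
  fun j =>
    if j.1 = 0 then 1
    else if j.1 = n + 1 then
      Real.sqrt q *
        (lamEig p q n m * Ubar n m (n : ℤ) / Real.sqrt q - Ubar n m ((n : ℤ) - 1) / Real.sqrt p)
    else
      lamEig p q n m * Ubar n m ((j.1 : ℤ) - 1) / Real.sqrt q
        - Ubar n m ((j.1 : ℤ) - 2) / Real.sqrt p

lemma theta_pos' (n m : ℕ) (hm1 : 1 ≤ m) : 0 < thetaAngle n m := by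
  unfold thetaAngle
  apply div_pos (mul_pos (by exact_mod_cast hm1) Real.pi_pos) (by positivity)

lemma theta_lt' (n m : ℕ) (hmn : m ≤ n) : thetaAngle n m < Real.pi := by
  unfold thetaAngle
  rw [div_lt_iff₀ (by positivity)]
  have : (m:ℝ) < (n:ℝ) + 1 := by exact_mod_cast Nat.lt_succ_of_le hmn
  nlinarith [Real.pi_pos]

lemma sin_theta_pos' (n m : ℕ) (hm1 : 1 ≤ m) (hmn : m ≤ n) : 0 < Real.sin (thetaAngle n m) :=
  Real.sin_pos_of_pos_of_lt_pi (theta_pos' n m hm1) (theta_lt' n m hmn)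

lemma theta_key' (n m : ℕ) : ((n:ℝ) + 1) * thetaAngle n m = m * Real.pi := by
  unfold thetaAngle; field_simp

lemma sum_cos_theta' (n m : ℕ) (hm1 : 1 ≤ m) (hmn : m ≤ n) :
    ∑ k ∈ Finset.range (n+1), Real.cos (2 * (k:ℝ) * thetaAngle n m) = 0 := by
  set θ := thetaAngle n m with hθdef
  have hθpos := theta_pos' n m hm1
  have hθlt := theta_lt' n m hmn
  have hkey := theta_key' n m
  set z : ℂ := Complex.exp (2 * θ * Complex.I) with hzdef
  have hzpow : ∀ k : ℕ, z ^ k = Complex.exp (((2 * (k:ℝ) * θ : ℝ) : ℂ) * Complex.I) := by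
    intro k
    rw [hzdef, ← Complex.exp_nat_mul]
    congr 1
    push_cast
    ring
  have hzn : z ^ (n+1) = 1 := by
    rw [hzpow]
    have h2 : ((2 * ((n+1:ℕ):ℝ) * θ : ℝ) : ℂ) * Complex.I = (m:ℤ) * (2*Real.pi*Complex.I) := by
      have : (2 * ((n+1:ℕ):ℝ) * θ : ℝ) = (m:ℝ) * (2*Real.pi) := by push_cast; nlinarith [hkey]
      rw [this]; push_cast; ring
    rw [h2, Complex.exp_int_mul_two_pi_mul_I]
  have hz1 : z ≠ 1 := by
    intro h
    rw [hzdef, Complex.exp_eq_one_iff] at h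
    obtain ⟨k, hk⟩ := h
    have hk' : ((2*θ : ℝ) : ℂ) * Complex.I = (((k:ℝ)*(2*Real.pi) : ℝ) : ℂ) * Complex.I := by
      push_cast; linear_combination hk
    have hk2 : (2*θ : ℝ) = (k:ℝ)*(2*Real.pi) := by
      have := mul_right_cancel₀ Complex.I_ne_zero hk'
      exact_mod_cast this
    have hθeq : θ = (k:ℝ) * Real.pi := by linarith
    rcases le_or_gt k 0 with hk0 | hk0
    · have : (k:ℝ) * Real.pi ≤ 0 :=
        mul_nonpos_of_nonpos_of_nonneg (by exact_mod_cast hk0) Real.pi_pos.le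
      linarith
    · have hk1 : (1:ℝ) ≤ (k:ℝ) := by exact_mod_cast hk0
      nlinarith [Real.pi_pos]
  have hgs := geom_sum_eq hz1 (n+1)
  rw [hzn] at hgs
  simp only [sub_self, zero_div] at hgs
  calc ∑ k ∈ range (n+1), Real.cos (2*(k:ℝ)*θ)
      = (∑ k ∈ range (n+1), z^k).re := by
        rw [Complex.re_sum]
        exact (sum_congr rfl fun k _ => by rw [hzpow, Complex.exp_ofReal_mul_I_re]).symm
    _ = 0 := by rw [hgs]; simp

lemma vVec_sq_mid' (p q : ℝ) (hp0 : 0 < p) (hq0 : 0 < q) (hpq : p + q = 1)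
    (n m : ℕ) (hs : Real.sin (thetaAngle n m) ≠ 0) (i : ℕ) (hi : i < n) :
    (vVec p q n m ((i+1 : ℕ) : Fin (n+2)))^2 =
      (p^2*(1 - Real.cos (2*((i:ℝ)+2)*thetaAngle n m))
        + q^2*(1 - Real.cos (2*((i:ℝ))*thetaAngle n m))
        - 2*p*q*(Real.cos (2*thetaAngle n m) - Real.cos (2*((i:ℝ)+1)*thetaAngle n m)))
      / (2*p*(Real.sin (thetaAngle n m))^2) := by
  have hval : (((i+1 : ℕ) : Fin (n+2))).1 = i + 1 := Fin.val_cast_of_lt (by omega)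
  set θ := thetaAngle n m with hθdef
  set x : ℝ := (i:ℝ) * θ with hxdef
  simp only [vVec, hval, Nat.succ_ne_zero, if_false, Ubar, lamEig]
  rw [if_neg (by omega)]
  push_cast
  have e1 : Real.cos (2*((i:ℝ)+2)*θ) =
      1 - 2*(Real.sin (x+θ)*Real.cos θ + Real.cos (x+θ)*Real.sin θ)^2 := by
    rw [show (2*((i:ℝ)+2)*θ : ℝ) = 2*((x+θ)+θ) by rw [hxdef]; ring,
      Real.cos_two_mul, Real.cos_sq', Real.sin_add]
    ring
  have e2 : Real.cos (2*((i:ℝ)+1)*θ) = 1 - 2*(Real.sin (x+θ))^2 := by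
    rw [show (2*((i:ℝ)+1)*θ : ℝ) = 2*(x+θ) by rw [hxdef]; ring,
      Real.cos_two_mul, Real.cos_sq']
    ring
  have e3 : Real.cos (2*(i:ℝ)*θ) = 1 - 2*(Real.sin x)^2 := by
    rw [show (2*(i:ℝ)*θ : ℝ) = 2*x by rw [hxdef]; ring, Real.cos_two_mul, Real.cos_sq']
    ring
  have e4 : Real.cos (2*θ) = 1 - 2*(Real.sin θ)^2 := by
    rw [Real.cos_two_mul, Real.cos_sq']; ring
  have e5 : Real.sin x = Real.sin (x+θ)*Real.cos θ - Real.cos (x+θ)*Real.sin θ := by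
    simpa using Real.sin_sub (x+θ) θ
  have e6 : Real.sqrt (p*q) = Real.sqrt p * Real.sqrt q := Real.sqrt_mul hp0.le q
  have earg : ((i:ℝ) + 1 - 1 + 1) * θ = x + θ := by rw [hxdef]; ring
  have earg2 : ((i:ℝ) + 1 - 2 + 1) * θ = x := by rw [hxdef]; ring
  rw [earg, earg2, e1, e2, e3, e4, e6, e5]
  have hsp : Real.sqrt p ^ 2 = p := Real.sq_sqrt hp0.le
  have hsq : Real.sqrt q ^ 2 = q := Real.sq_sqrt hq0.le
  have hsp0 : Real.sqrt p ≠ 0 := by positivity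
  have hsq0 : Real.sqrt q ≠ 0 := by positivity
  have hC : Real.cos (x+θ)^2 = 1 - Real.sin (x+θ)^2 := Real.cos_sq' _
  have hc : Real.cos θ^2 = 1 - Real.sin θ^2 := Real.cos_sq' _
  set a := Real.sin (x+θ)
  set C := Real.cos (x+θ)
  set c := Real.cos θ
  set s := Real.sin θ
  set sp := Real.sqrt p
  set sq := Real.sqrt q
  have hdb : (a*c+C*s)*(a*c-C*s) = a^2 - s^2 := by
    linear_combination a^2*hc - s^2*hC
  field_simp
  have hX : 2 * p * c * a - (c * a - s * C) = p*(c*a+s*C) - q*(c*a-s*C) := by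
    linear_combination (c*a - s*C)*hpq
  rw [hsp, hX]
  linear_combination (-4*p^2*q)*hdb

lemma vVec_sq_last' (p q : ℝ) (hp0 : 0 < p) (hq0 : 0 < q)
    (n m : ℕ) (hs : Real.sin (thetaAngle n m) ≠ 0) :
    (vVec p q n m ((n+1 : ℕ) : Fin (n+2)))^2 = q / p := by
  have hval : (((n+1 : ℕ) : Fin (n+2))).1 = n + 1 := Fin.val_cast_of_lt (by omega)
  set θ := thetaAngle n m with hθdef
  simp only [vVec, hval, Nat.succ_ne_zero, if_false, if_pos rfl, Ubar]
  push_cast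
  rw [show ((n:ℝ) + 1) * θ = (m:ℝ) * Real.pi from theta_key' n m,
    show ((n:ℝ) - 1 + 1) * θ = (n:ℝ)*θ by ring]
  have hsn : Real.sin ((n:ℝ)*θ) = -Real.cos ((m:ℝ)*Real.pi) * Real.sin θ := by
    rw [show (n:ℝ)*θ = (m:ℝ)*Real.pi - θ by linear_combination theta_key' n m,
      Real.sin_sub, Real.sin_nat_mul_pi]
    ring
  have hcos2 : Real.cos ((m:ℝ)*Real.pi)^2 = 1 := by
    have h := Real.sin_sq_add_cos_sq ((m:ℝ)*Real.pi)
    rw [Real.sin_nat_mul_pi] at h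
    linarith
  rw [Real.sin_nat_mul_pi, hsn]
  have hsp : Real.sqrt p ^ 2 = p := Real.sq_sqrt hp0.le
  have hsq : Real.sqrt q ^ 2 = q := Real.sq_sqrt hq0.le
  have hsp0 : Real.sqrt p ≠ 0 := by positivity
  have hsq0 : Real.sqrt q ≠ 0 := by positivity
  field_simp
  rw [← hθdef]
  rw [div_eq_iff (pow_ne_zero 2 hs)]
  linear_combination (Real.cos ((m:ℝ)*Real.pi)^2*Real.sin θ^2*p)*hsq
    + (q*Real.sin θ^2*p)*hcos2 - (q*Real.sin θ^2)*hsp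

/-- **Lemma.** For each `1 ≤ m ≤ n`, the squared Euclidean norm of `v_m` is
`‖v_m‖² = ((n+1)/(2p))·(1 - λ_m²)/sin²θ_m`. -/
theorem vVec_normSq (n : ℕ) (hn : 1 ≤ n)
    (p q : ℝ) (hp0 : 0 < p) (hp1 : p < 1) (hq0 : 0 < q) (hq1 : q < 1) (hpq : p + q = 1)
    (m : ℕ) (hm1 : 1 ≤ m) (hmn : m ≤ n) :
    ∑ j : Fin (n + 2), (vVec p q n m j) ^ 2 =
      ((n + 1 : ℝ) / (2 * p)) * (1 - (lamEig p q n m) ^ 2) / (Real.sin (thetaAngle n m)) ^ 2 := by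
  have hs0 : 0 < Real.sin (thetaAngle n m) := sin_theta_pos' n m hm1 hmn
  have hs : Real.sin (thetaAngle n m) ≠ 0 := ne_of_gt hs0
  set θ := thetaAngle n m with hθdef
  -- cosine sums
  have hT := sum_cos_theta' n m hm1 hmn
  have hfn : Real.cos (2*((n:ℕ):ℝ)*θ) = Real.cos (2*θ) := by
    rw [show 2*((n:ℕ):ℝ)*θ = (m:ℝ)*(2*Real.pi) - 2*θ by linear_combination 2*(theta_key' n m),
      Real.cos_nat_mul_two_pi_sub]
  have hfn1 : Real.cos (2*(((n:ℕ):ℝ)+1)*θ) = 1 := by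
    rw [show 2*(((n:ℕ):ℝ)+1)*θ = (m:ℝ)*(2*Real.pi) by linear_combination 2*(theta_key' n m)]
    exact Real.cos_nat_mul_two_pi m
  have hB : ∑ i ∈ range n, Real.cos (2*(i:ℝ)*θ) = -Real.cos (2*θ) := by
    have h := Finset.sum_range_succ (fun k => Real.cos (2*(k:ℝ)*θ)) n
    rw [hT, hfn] at h
    linarith
  have hC : ∑ i ∈ range n, Real.cos (2*((i:ℝ)+1)*θ) = -1 := by
    have h := Finset.sum_range_succ' (fun k => Real.cos (2*(k:ℝ)*θ)) n
    rw [hT] at h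
    have h0 : Real.cos (2*((0:ℕ):ℝ)*θ) = 1 := by norm_num
    rw [h0] at h
    have hcast : ∑ i ∈ range n, Real.cos (2*(((i+1:ℕ)):ℝ)*θ)
        = ∑ i ∈ range n, Real.cos (2*((i:ℝ)+1)*θ) := by
      apply sum_congr rfl
      intro i _
      push_cast
      ring_nf
    rw [hcast] at h
    linarith
  have hA : ∑ i ∈ range n, Real.cos (2*((i:ℝ)+2)*θ) = -Real.cos (2*θ) := by
    have hT2 : ∑ k ∈ range (n+2), Real.cos (2*(k:ℝ)*θ) = 1 := by
      rw [Finset.sum_range_succ, hT]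
      push_cast
      rw [hfn1]
      norm_num
    have h1 := Finset.sum_range_succ' (fun k => Real.cos (2*(k:ℝ)*θ)) (n+1)
    rw [hT2] at h1
    have h2 := Finset.sum_range_succ' (fun k => Real.cos (2*((k+1:ℕ):ℝ)*θ)) n
    rw [h2] at h1
    have hc1 : ∑ i ∈ range n, Real.cos (2*(((i+1+1:ℕ)):ℝ)*θ)
        = ∑ i ∈ range n, Real.cos (2*((i:ℝ)+2)*θ) := by
      apply sum_congr rfl
      intro i _
      congr 1
      push_cast
      ring
    rw [hc1] at h1
    have h00 : Real.cos (2*((0+1:ℕ):ℝ)*θ) = Real.cos (2*θ) := by norm_num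
    have h01 : Real.cos (2*((0:ℕ):ℝ)*θ) = 1 := by norm_num
    rw [h00, h01] at h1
    linarith
  -- convert Fin sum to range sum
  have hconv : ∑ j : Fin (n+2), (vVec p q n m j)^2
      = ∑ k ∈ range (n+2), (vVec p q n m ((k:ℕ) : Fin (n+2)))^2 := by
    rw [← Fin.sum_univ_eq_sum_range (fun k => (vVec p q n m ((k:ℕ) : Fin (n+2)))^2) (n+2)]
    apply sum_congr rfl
    intro j _
    rw [Fin.cast_val_eq_self]
  rw [hconv, Finset.sum_range_succ, Finset.sum_range_succ']
  have hv0 : (vVec p q n m ((0:ℕ) : Fin (n+2)))^2 = 1 := by simp [vVec]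
  have hvlast := vVec_sq_last' p q hp0 hq0 n m hs
  have hmid : ∑ i ∈ range n, (vVec p q n m ((i+1:ℕ) : Fin (n+2)))^2
      = ((n:ℝ)*(p^2+q^2) + (p^2+q^2)*Real.cos (2*θ) - 2*p*q*((n:ℝ)*Real.cos (2*θ)+1))
        /(2*p*Real.sin θ^2) := by
    rw [sum_congr rfl (fun i hi => vVec_sq_mid' p q hp0 hq0 hpq n m hs i (mem_range.mp hi))]
    rw [← Finset.sum_div]
    congr 1
    have expand : ∀ i:ℕ, p^2*(1 - Real.cos (2*((i:ℝ)+2)*θ)) + q^2*(1 - Real.cos (2*(i:ℝ)*θ))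
        - 2*p*q*(Real.cos (2*θ) - Real.cos (2*((i:ℝ)+1)*θ))
        = (p^2+q^2-2*p*q*Real.cos (2*θ)) - p^2*Real.cos (2*((i:ℝ)+2)*θ)
          - q^2*Real.cos (2*(i:ℝ)*θ) + 2*p*q*Real.cos (2*((i:ℝ)+1)*θ) := fun i => by ring
    rw [sum_congr rfl (fun i _ => expand i), Finset.sum_add_distrib, Finset.sum_sub_distrib,
      Finset.sum_sub_distrib, Finset.sum_const, card_range, ← Finset.mul_sum, ← Finset.mul_sum,
      ← Finset.mul_sum, hA, hB, hC]
    rw [nsmul_eq_mul]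
    ring
  rw [hmid, hv0, hvlast]
  have hlam : (lamEig p q n m)^2 = 4*p*q*Real.cos θ^2 := by
    simp only [lamEig, ← hθdef]
    rw [mul_pow, mul_pow, Real.sq_sqrt (by positivity)]
    ring
  rw [hlam, Real.cos_two_mul, Real.sin_sq]
  have h1c : (0:ℝ) < 1 - Real.cos θ^2 := by
    have h0 : 0 < Real.sin θ^2 := by positivity
    rw [Real.sin_sq] at h0
    exact h0
  have hq' : q = 1 - p := by linarith
  subst hq'
  field_simp
  ring
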